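/- Under the same setup (positive solution (γ₁,γ₂) of the predator-prey ODE, with scale functions βₛ, β₁, β₂, βₘ and elasticity functions s_x, g_x, g_y, m_y as defined), the scale function β₁ = G(γ₁,γ₂)/γ₁ satisfies β₁' = β₁ ( (βₛ − β₁) g_x + (β₂ − βₘ) g_y − (βₛ − β₁) ). -/

import Mathlib

/-- Moduli space flow equation for `β₁ = G(γ₁,γ₂)/γ₁`:
`β₁' = β₁((βₛ − β₁) g_x + (β₂ − βₘ) g_y − (βₛ − β₁))`. -/
theorem moduli_flow_beta_1
    (S M : ℝ → ℝ) (G : ℝ × ℝ → ℝ)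
    (γ₁ γ₂ : ℝ → ℝ) (t : ℝ)
    (hSpos : ∀ x, 0 < x → 0 < S x)
    (hGpos : ∀ p : ℝ × ℝ, 0 < p.1 → 0 < p.2 → 0 < G p)
    (hMpos : ∀ y, 0 < y → 0 < M y)
    (hS : Differentiable ℝ S)
    (hM : Differentiable ℝ M)
    (hG : Differentiable ℝ G)
    (hγ₁pos : ∀ s, 0 < γ₁ s) (hγ₂pos : ∀ s, 0 < γ₂ s)
    (hode₁ : ∀ s, HasDerivAt γ₁ (S (γ₁ s) - G (γ₁ s, γ₂ s)) s)
    (hode₂ : ∀ s, HasDerivAt γ₂ (G (γ₁ s, γ₂ s) - M (γ₂ s)) s) :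
    HasDerivAt (fun s => G (γ₁ s, γ₂ s) / γ₁ s)
      ((G (γ₁ t, γ₂ t) / γ₁ t) *
        ((S (γ₁ t) / γ₁ t - G (γ₁ t, γ₂ t) / γ₁ t) *
            (γ₁ t * fderiv ℝ G (γ₁ t, γ₂ t) (1, 0) / G (γ₁ t, γ₂ t)) +
         (G (γ₁ t, γ₂ t) / γ₂ t - M (γ₂ t) / γ₂ t) *
            (γ₂ t * fderiv ℝ G (γ₁ t, γ₂ t) (0, 1) / G (γ₁ t, γ₂ t)) -
         (S (γ₁ t) / γ₁ t - G (γ₁ t, γ₂ t) / γ₁ t))) t := by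
  have hγ := HasDerivAt.prodMk (hode₁ t) (hode₂ t)
  have hGd := (hG (γ₁ t, γ₂ t)).hasFDerivAt
  have hcomp : HasDerivAt (fun s => G (γ₁ s, γ₂ s))
      (fderiv ℝ G (γ₁ t, γ₂ t) (S (γ₁ t) - G (γ₁ t, γ₂ t), G (γ₁ t, γ₂ t) - M (γ₂ t))) t :=
    hGd.comp_hasDerivAt t hγ
  have hdiv : HasDerivAt (fun s => G (γ₁ s, γ₂ s) / γ₁ s) _ t := hcomp.div (hode₁ t) (ne_of_gt (hγ₁pos t))
  convert hdiv using 1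
  have hexp : ((S (γ₁ t) - G (γ₁ t, γ₂ t), G (γ₁ t, γ₂ t) - M (γ₂ t)) : ℝ × ℝ)
      = (S (γ₁ t) - G (γ₁ t, γ₂ t)) • ((1:ℝ), (0:ℝ)) + (G (γ₁ t, γ₂ t) - M (γ₂ t)) • ((0:ℝ), (1:ℝ)) := by
    simp
  rw [hexp, map_add, map_smul, map_smul]
  have h1 := (hγ₁pos t).ne'
  have h2 := (hγ₂pos t).ne'
  have hGne := (hGpos (γ₁ t, γ₂ t) (hγ₁pos t) (hγ₂pos t)).ne'
  field_simp
  ring
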